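/- Let n, r, k be positive integers with k ≥ 2 and k·r ≤ (k−1)·n, and let 𝓕 be a k-wise intersecting family of r-element subsets of {1,…,n}. Then |𝓕| ≤ C(n−1, r−1) (binomial coefficient n−1 choose r−1). -/

import Mathlib

open Finset

/-- A family is `k`-wise intersecting: any `k` (not necessarily distinct) members
have a common element. -/
def KWiseIntersecting (k : ℕ) (𝓕 : Finset (Finset ℕ)) : Prop :=
  ∀ f : Fin k → Finset ℕ, (∀ i, f i ∈ 𝓕) → ∃ v, ∀ i, v ∈ f i

namespace FranklAux


lemma lemmaC (n d k : ℕ) (hn : 0 < n) (h1 : n ≤ k * d) (h2 : k * d + 2 ≤ n + k)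
    (T : Finset ℕ) (hT : ∀ x ∈ T, x < n) (hTcard : n + 1 ≤ T.card + d) :
    ∃ t : Fin k → ℕ, (∀ l, t l ∈ T) ∧ ∀ x, x < n → ∃ l c, c < d ∧ (t l + c) % n = x := by
  have hd : 0 < d := by
    rcases Nat.eq_zero_or_pos d with h | h
    · subst h; simp at h1; omega
    · exact h
  -- k' : least j with n ≤ j * d
  have hex : ∃ j, n ≤ j * d := ⟨k, h1⟩
  set k' := Nat.find hex with hk'def
  have hk'spec : n ≤ k' * d := Nat.find_spec hex
  have hk'le : k' ≤ k := Nat.find_min' hex h1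
  have hk'pos : 0 < k' := by
    rcases Nat.eq_zero_or_pos k' with h | h
    · exfalso; rw [h] at hk'spec; simp at hk'spec; omega
    · exact h
  have hk'min : (k' - 1) * d < n := by
    have := Nat.find_min hex (show k' - 1 < k' by omega)
    omega
  have hsplit : (k' - 1) * d + d = k' * d := by
    have h : k' - 1 + 1 = k' := by omega
    calc (k' - 1) * d + d = (k' - 1 + 1) * d := by ring
    _ = k' * d := by rw [h]
  have h2' : k' * d + 2 ≤ n + k' := by
    obtain ⟨m, rfl⟩ : ∃ m, k = k' + m := ⟨k - k', by omega⟩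
    have hmd : m ≤ m * d := Nat.le_mul_of_pos_right m hd
    have : (k' + m) * d = k' * d + m * d := by ring
    omega
  set δ := k' * d - n with hδdef
  have hδ : δ + n = k' * d := by omega
  have hδd : δ < d := by omega
  have hδk : δ + 2 ≤ k' := by omega
  have hk'n : k' ≤ n := by
    have : k' - 1 ≤ (k' - 1) * d := Nat.le_mul_of_pos_right _ hd
    omega
  set w := n - δ with hwdef
  have hw : w + δ = n := by omega
  -- Bad set
  set Bad := (range n) \ T with hBad
  have hTsub : T ⊆ range n := fun x hx => mem_range.2 (hT x hx)
  have hBadcard : Bad.card + T.card = n := by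
    rw [hBad, card_sdiff_of_subset hTsub, card_range]
    have := card_le_card hTsub
    rw [card_range] at this
    omega
  -- find a good anchor
  have hanchor : ∃ u ∈ T, ∀ j, 1 ≤ j → j ≤ k' - 1 → (u + j * d + w) % n ∈ T := by
    by_contra hcon
    push_neg at hcon
    have hmap : ∀ u ∈ T, ∃ p : ℕ × ℕ, p ∈ (Finset.Icc 1 (k'-1)) ×ˢ Bad ∧
        (u + p.1 * d + w) % n = p.2 := by
      intro u hu
      obtain ⟨j, hj1, hj2, hjmem⟩ := hcon u hu
      refine ⟨(j, (u + j * d + w) % n), ?_, rfl⟩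
      rw [mem_product]
      refine ⟨Finset.mem_Icc.2 ⟨hj1, hj2⟩, ?_⟩
      rw [hBad, mem_sdiff]
      exact ⟨mem_range.2 (Nat.mod_lt _ hn), hjmem⟩
    choose p hp hpval using hmap
    have hinj : ∀ u₁ (h₁ : u₁ ∈ T), ∀ u₂ (h₂ : u₂ ∈ T), p u₁ h₁ = p u₂ h₂ → u₁ = u₂ := by
      intro u₁ h₁ u₂ h₂ heq
      have e1 := hpval u₁ h₁
      have e2 := hpval u₂ h₂
      rw [heq] at e1
      rw [← e2] at e1
      have hu₁ : u₁ < n := hT _ h₁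
      have hu₂ : u₂ < n := hT _ h₂
      have : u₁ % n = u₂ % n := by
        have h3 : u₁ + ((p u₂ h₂).1 * d + w) ≡ u₂ + ((p u₂ h₂).1 * d + w) [MOD n] := by
          unfold Nat.ModEq
          rw [← Nat.add_assoc, ← Nat.add_assoc]
          exact e1
        exact Nat.ModEq.add_right_cancel' _ h3
      rwa [Nat.mod_eq_of_lt hu₁, Nat.mod_eq_of_lt hu₂] at this
    have hcard : T.card ≤ ((Finset.Icc 1 (k'-1)) ×ˢ Bad).card := by
      apply Finset.card_le_card_of_injOn (fun u => if h : u ∈ T then p u h else (0,0))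
      · intro u hu; have hu' : u ∈ T := hu; simp only [mem_coe, dif_pos hu']; exact hp u hu'
      · intro u₁ h₁ u₂ h₂ heq
        simp only [mem_coe] at h₁ h₂
        simp only [dif_pos h₁, dif_pos h₂] at heq
        exact hinj u₁ h₁ u₂ h₂ heq
    rw [Finset.card_product, Nat.card_Icc] at hcard
    obtain ⟨a, ha⟩ : ∃ a, k' = a + 1 := ⟨k' - 1, by omega⟩
    obtain ⟨b, hb⟩ : ∃ b, d = b + 1 := ⟨d - 1, by omega⟩
    have hkd : k' * d = a * b + a + b + 1 := by rw [ha, hb]; ring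
    have hab : T.card ≤ a * Bad.card := by
      rw [ha] at hcard; simpa using hcard
    have hbb : Bad.card ≤ b := by omega
    have : a * Bad.card ≤ a * b := Nat.mul_le_mul_left a hbb
    omega
  obtain ⟨u, huT, hugood⟩ := hanchor
  have hun : u < n := hT _ huT
  refine ⟨fun l => if l.val = 0 then u else if l.val ≤ k' - 1 then (u + l.val * d + w) % n else u,
    ?_, ?_⟩
  · intro l
    by_cases h0 : l.val = 0
    · simp only [if_pos h0]; exact huT
    · by_cases hle : l.val ≤ k' - 1
      · simp only [if_neg h0, if_pos hle]
        exact hugood l.val (by omega) hle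
      · simp only [if_neg h0, if_neg hle]; exact huT
  · intro x hx
    set y := (x + n - u) % n with hydef
    have hyn : y < n := Nat.mod_lt _ hn
    have hxy : (u + y) % n = x := by
      have h₁ : u + y ≡ u + (x + n - u) [MOD n] :=
        Nat.ModEq.add_left u ((x + n - u).mod_modEq n)
      have h₂ : u + (x + n - u) = x + n := by omega
      calc (u + y) % n = (u + (x + n - u)) % n := h₁
      _ = (x + n) % n := by rw [h₂]
      _ = x % n := Nat.add_mod_right x n
      _ = x := Nat.mod_eq_of_lt hx
    by_cases hyd : y < d
    · refine ⟨⟨0, by omega⟩, y, hyd, ?_⟩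
      simpa using hxy
    · push_neg at hyd
      set j := (y + δ) / d with hjdef
      set c := (y + δ) % d with hcdef
      have hcd : c < d := Nat.mod_lt _ hd
      have hcj : c + d * j = y + δ := Nat.mod_add_div _ _
      have hj1 : 1 ≤ j := by
        rw [hjdef, Nat.le_div_iff_mul_le hd]; omega
      have hjk' : j < k' := by
        by_contra hcon
        push_neg at hcon
        have : k' * d ≤ j * d := Nat.mul_le_mul_right d hcon
        have : d * j = j * d := Nat.mul_comm d j
        omega
      have hjk : j < k := by omega
      refine ⟨⟨j, hjk⟩, c, hcd, ?_⟩
      have hj0 : ¬ (j = 0) := by omega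
      have hjle : j ≤ k' - 1 := by omega
      simp only [if_neg hj0, if_pos hjle]
      have h₁ : (u + j * d + w) % n + c ≡ u + j * d + w + c [MOD n] :=
        Nat.ModEq.add_right c ((u + j * d + w).mod_modEq n)
      have h₂ : u + j * d + w + c = u + y + n := by
        have : d * j = j * d := Nat.mul_comm d j
        omega
      calc ((u + j * d + w) % n + c) % n = (u + j * d + w + c) % n := h₁
      _ = (u + y + n) % n := by rw [h₂]
      _ = (u + y) % n := Nat.add_mod_right _ n
      _ = x := hxy



-- transport between fibers
lemma fiber_card_eq (n : ℕ) (J F : Finset (Fin n)) (σ₀ : Equiv.Perm (Fin n))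
    (hσ₀ : J.image ⇑σ₀ = F) :
    ((Finset.univ : Finset (Equiv.Perm (Fin n))).filter fun σ : Equiv.Perm (Fin n) => J.image ⇑σ = F).card
      = ((Finset.univ : Finset (Equiv.Perm (Fin n))).filter fun σ : Equiv.Perm (Fin n) => J.image ⇑σ = J).card := by
  refine Finset.card_bij' (fun σ _ => σ.trans σ₀.symm) (fun τ _ => τ.trans σ₀) ?hi ?hj ?li ?ri
  case li => intro σ _; ext x; simp
  case ri => intro τ _; ext x; simp
  case hi =>
    intro σ hσ
    simp only [mem_filter, mem_univ, true_and] at hσ ⊢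
    ext x
    simp only [Finset.mem_image, Equiv.coe_trans, Function.comp_apply]
    constructor
    · rintro ⟨a, ha, rfl⟩
      have : σ a ∈ F := by rw [← hσ]; exact Finset.mem_image_of_mem _ ha
      rw [← hσ₀] at this
      obtain ⟨b, hb, hba⟩ := Finset.mem_image.1 this
      rw [← hba, Equiv.symm_apply_apply]; exact hb
    · intro hx
      have : σ₀ x ∈ F := by rw [← hσ₀]; exact Finset.mem_image_of_mem _ hx
      rw [← hσ] at this
      obtain ⟨a, ha, haa⟩ := Finset.mem_image.1 this
      exact ⟨a, ha, by rw [haa, Equiv.symm_apply_apply]⟩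
  case hj =>
    intro τ hτ
    simp only [mem_filter, mem_univ, true_and] at hτ ⊢
    ext y
    simp only [Finset.mem_image, Equiv.coe_trans, Function.comp_apply]
    constructor
    · rintro ⟨a, ha, rfl⟩
      have : τ a ∈ J := by rw [← hτ]; exact Finset.mem_image_of_mem _ ha
      rw [← hσ₀]; exact Finset.mem_image_of_mem _ this
    · intro hy
      rw [← hσ₀] at hy
      obtain ⟨b, hb, hby⟩ := Finset.mem_image.1 hy
      rw [← hτ] at hb
      obtain ⟨a, ha, hab⟩ := Finset.mem_image.1 hb
      exact ⟨a, ha, by rw [hab, hby]⟩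

lemma exists_perm_image (n : ℕ) (J F : Finset (Fin n)) (h : J.card = F.card) :
    ∃ σ₀ : Equiv.Perm (Fin n), J.image ⇑σ₀ = F := by
  classical
  let e : {x // x ∈ J} ≃ {x // x ∈ F} := Finset.equivOfCardEq h
  refine ⟨e.extendSubtype, ?_⟩
  ext y
  simp only [Finset.mem_image]
  constructor
  · rintro ⟨x, hx, rfl⟩
    rw [e.extendSubtype_apply_of_mem x hx]
    exact (e ⟨x, hx⟩).2
  · intro hy
    refine ⟨(e.symm ⟨y, hy⟩).val, (e.symm ⟨y, hy⟩).2, ?_⟩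
    rw [e.extendSubtype_apply_of_mem _ (e.symm ⟨y, hy⟩).2]
    simp

lemma lemmaK (n : ℕ) (J F : Finset (Fin n)) (h : J.card = F.card) :
    ((Finset.univ : Finset (Equiv.Perm (Fin n))).filter fun σ : Equiv.Perm (Fin n) => J.image ⇑σ = F).card
      = Nat.factorial J.card * Nat.factorial (n - J.card) := by
  classical
  set r := J.card with hr
  have hrn : r ≤ n := by
    have := Finset.card_le_univ J
    simpa using this
  obtain ⟨σ₀, hσ₀⟩ := exists_perm_image n J F h
  rw [fiber_card_eq n J F σ₀ hσ₀]
  have htotal : (Finset.univ : Finset (Equiv.Perm (Fin n))).card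
      = ∑ F' ∈ Finset.powersetCard r (Finset.univ : Finset (Fin n)),
          ((Finset.univ : Finset (Equiv.Perm (Fin n))).filter fun σ : Equiv.Perm (Fin n) => J.image ⇑σ = F').card := by
    apply Finset.card_eq_sum_card_fiberwise
    intro σ _
    simp only [mem_coe]
    rw [Finset.mem_powersetCard_univ, Finset.card_image_of_injective _ σ.injective]
  have hconst : ∀ F' ∈ Finset.powersetCard r (Finset.univ : Finset (Fin n)),
      ((Finset.univ : Finset (Equiv.Perm (Fin n))).filter fun σ : Equiv.Perm (Fin n) => J.image ⇑σ = F').card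
        = ((Finset.univ : Finset (Equiv.Perm (Fin n))).filter fun σ : Equiv.Perm (Fin n) => J.image ⇑σ = J).card := by
    intro F' hF'
    rw [Finset.mem_powersetCard_univ] at hF'
    obtain ⟨τ₀, hτ₀⟩ := exists_perm_image n J F' (by omega)
    exact fiber_card_eq n J F' τ₀ hτ₀
  rw [Finset.sum_congr rfl hconst, Finset.sum_const, Finset.card_powersetCard] at htotal
  have hcards : (Finset.univ : Finset (Equiv.Perm (Fin n))).card = Nat.factorial n := by
    rw [Finset.card_univ, Fintype.card_perm, Fintype.card_fin]
  have hchoose : (Finset.univ : Finset (Fin n)).card = n := by simp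
  rw [hcards, hchoose] at htotal
  have hfact : n.choose r * (Nat.factorial r * Nat.factorial (n - r)) = Nat.factorial n := by
    rw [← Nat.choose_mul_factorial_mul_factorial hrn]; ring
  have hpos : 0 < n.choose r := Nat.choose_pos hrn
  have hkey : n.choose r * (Nat.factorial r * Nat.factorial (n - r)) = n.choose r
      * ((Finset.univ : Finset (Equiv.Perm (Fin n))).filter fun σ : Equiv.Perm (Fin n) => J.image ⇑σ = J).card := by
    rw [hfact, htotal]; ring
  exact (Nat.eq_of_mul_eq_mul_left hpos hkey).symm


/-- the arc of length `r` starting at position `i` in the circular order given by `σ`. -/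
def farc (n r : ℕ) (hn : 0 < n) (σ : Equiv.Perm (Fin n)) (i : ℕ) : Finset ℕ :=
  (Finset.range r).image (fun c => (σ ⟨(i + c) % n, Nat.mod_lt _ hn⟩).val + 1)



variable (n r k : ℕ)

lemma boundary (hn : 0 < n) (hr : 0 < r) (hk : 2 ≤ k)
    (hkr : k * r ≤ (k - 1) * n) (hb : (k - 1) * (n - 1) < k * r)
    (𝓕 : Finset (Finset ℕ)) (h𝓕 : ∀ F ∈ 𝓕, F ⊆ Finset.Icc 1 n ∧ F.card = r)
    (hint : KWiseIntersecting k 𝓕) : 𝓕.card ≤ (n - 1).choose (r - 1) := by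
  classical
  obtain ⟨m, rfl⟩ : ∃ m, k = m + 1 := ⟨k - 1, by omega⟩
  have hm : 1 ≤ m := by omega
  simp only [Nat.add_sub_cancel] at hkr hb
  -- r < n
  have hrn : r < n := by
    by_contra hcon
    push_neg at hcon
    have h1 : (m + 1) * n ≤ (m + 1) * r := Nat.mul_le_mul_left _ hcon
    have h2 : (m + 1) * n = m * n + n := by ring
    omega
  set d := n - r with hddef
  have hrd : r + d = n := by omega
  have he1 : (m + 1) * n = (m + 1) * r + (m + 1) * d := by
    rw [← Nat.mul_add, hrd]
  have hd1 : 0 < d := by omega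
  -- Lemma C hypotheses
  have hC1 : n ≤ (m + 1) * d := by
    have : m * n + n = (m + 1) * n := by ring
    omega
  have hC2 : (m + 1) * d + 2 ≤ n + (m + 1) := by
    have e2 : m * (n - 1) + m = m * n := by
      have : m * (n - 1) = m * n - m := by
        obtain ⟨n', rfl⟩ : ∃ n', n = n' + 1 := ⟨n - 1, by omega⟩
        simp [Nat.mul_add]
      have hmn : m ≤ m * n := Nat.le_mul_of_pos_right m hn
      omega
    have e3 : (m + 1) * n = m * n + n := by ring
    omega
  -- per-σ bound
  have hperm : ∀ σ : Equiv.Perm (Fin n),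
      ((range n).filter fun i => farc n r hn σ i ∈ 𝓕).card ≤ r := by
    intro σ
    by_contra hcon
    push_neg at hcon
    set S := (range n).filter fun i => farc n r hn σ i ∈ 𝓕 with hSdef
    have hSsub : S ⊆ range n := filter_subset _ _
    set T := S.image (fun i => (i + r) % n) with hTdef
    have hTcard : T.card = S.card := by
      apply card_image_of_injOn
      intro i₁ h₁ i₂ h₂ heq
      have hi₁ : i₁ < n := mem_range.1 (hSsub (by simpa using h₁))
      have hi₂ : i₂ < n := mem_range.1 (hSsub (by simpa using h₂))
      have : i₁ % n = i₂ % n := Nat.ModEq.add_right_cancel' r heq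
      rwa [Nat.mod_eq_of_lt hi₁, Nat.mod_eq_of_lt hi₂] at this
    obtain ⟨t, htT, hcover⟩ := lemmaC n d (m + 1) hn hC1 hC2 T
      (fun x hx => by
        obtain ⟨i, _, rfl⟩ := mem_image.1 hx
        exact Nat.mod_lt _ hn)
      (by omega)
    have hs : ∀ l, ∃ a, a ∈ S ∧ (a + r) % n = t l := by
      intro l
      obtain ⟨a, ha, haa⟩ := mem_image.1 (htT l)
      exact ⟨a, ha, haa⟩
    choose s hsS hst using hs
    obtain ⟨v, hv⟩ := hint (fun l => farc n r hn σ (s l))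
      (fun l => (mem_filter.1 (hsS l)).2)
    have hk0 : 0 < m + 1 := by omega
    have hvc : ∀ l, ∃ c, c < r ∧ ∃ p : Fin n, (p : ℕ) = (s l + c) % n ∧ (σ p).val + 1 = v := by
      intro l
      obtain ⟨c, hc, hcv⟩ := mem_image.1 (hv l)
      exact ⟨c, mem_range.1 hc, (⟨(s l + c) % n, Nat.mod_lt _ hn⟩ : Fin n), rfl, hcv⟩
    obtain ⟨c₀, hc₀r, p₀, hp₀, hp₀v⟩ := hvc ⟨0, hk0⟩
    have hxn : (s ⟨0, hk0⟩ + c₀) % n < n := Nat.mod_lt _ hn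
    obtain ⟨l, c', hc'd, hlc⟩ := hcover ((s ⟨0, hk0⟩ + c₀) % n) hxn
    obtain ⟨c, hcr, p, hp, hpv⟩ := hvc l
    have hpp : p = p₀ := σ.injective (Fin.ext (by omega))
    have hposeq : (s l + c) % n = (s ⟨0, hk0⟩ + c₀) % n := by
      rw [← hp, hpp, hp₀]
    have hcov2 : (s l + (r + c')) % n = (s ⟨0, hk0⟩ + c₀) % n := by
      rw [← hlc, ← hst l, Nat.mod_add_mod, Nat.add_assoc]
    have : c = r + c' := by
      have hmod : c % n = (r + c') % n := by
        have h1 : (s l + c) % n = (s l + (r + c')) % n := by rw [hposeq, hcov2]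
        exact Nat.ModEq.add_left_cancel' (s l) h1
      rwa [Nat.mod_eq_of_lt (by omega), Nat.mod_eq_of_lt (by omega)] at hmod
    omega
  -- the fixed index set J i and the Fin-version F' of each F
  have hinj1 : Function.Injective (fun p : Fin n => (p : ℕ) + 1) := by
    intro p q hpq
    simp only [Nat.add_right_cancel_iff] at hpq
    exact Fin.ext hpq
  have harc : ∀ (σ : Equiv.Perm (Fin n)) (i : ℕ), farc n r hn σ i
      = (((range r).image (fun c => (⟨(i + c) % n, Nat.mod_lt _ hn⟩ : Fin n))).image
          ⇑σ).image (fun p : Fin n => (p : ℕ) + 1) := by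
    intro σ i
    rw [Finset.image_image, Finset.image_image]
    rfl
  have hJcard : ∀ i : ℕ,
      ((range r).image (fun c => (⟨(i + c) % n, Nat.mod_lt _ hn⟩ : Fin n))).card = r := by
    intro i
    rw [card_image_of_injOn, card_range]
    intro c₁ h₁ c₂ h₂ heq
    simp only [mem_coe, mem_range] at h₁ h₂
    have hv : (i + c₁) % n = (i + c₂) % n := congrArg Fin.val heq
    have hmm := Nat.ModEq.add_left_cancel' i hv
    simp only [Nat.ModEq] at hmm
    rwa [Nat.mod_eq_of_lt (by omega), Nat.mod_eq_of_lt (by omega)] at hmm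
  -- count of permutations realizing a given arc
  have hfiber : ∀ (i : ℕ) (F : Finset ℕ), F ∈ 𝓕 →
      ((Finset.univ : Finset (Equiv.Perm (Fin n))).filter
        fun σ : Equiv.Perm (Fin n) => farc n r hn σ i = F).card
      = Nat.factorial r * Nat.factorial (n - r) := by
    intro i F hF
    set J := (range r).image (fun c => (⟨(i + c) % n, Nat.mod_lt _ hn⟩ : Fin n)) with hJ
    set F' := (Finset.univ : Finset (Fin n)).filter (fun p : Fin n => (p : ℕ) + 1 ∈ F) with hF'
    have hFeq : F = F'.image (fun p : Fin n => (p : ℕ) + 1) := by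
      ext x
      simp only [hF', Finset.mem_image, Finset.mem_filter, Finset.mem_univ, true_and]
      constructor
      · intro hx
        have hx1 := (h𝓕 F hF).1 hx
        rw [Finset.mem_Icc] at hx1
        refine ⟨⟨x - 1, by omega⟩, ?_, by simp; omega⟩
        simpa using (show x - 1 + 1 = x by omega) ▸ hx
      · rintro ⟨p, hp, rfl⟩
        exact hp
    have hF'card : F'.card = r := by
      have : (F'.image (fun p : Fin n => (p : ℕ) + 1)).card = F'.card :=
        Finset.card_image_of_injective _ hinj1
      rw [← hFeq] at this
      rw [← this, (h𝓕 F hF).2]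
    have hcond : ∀ σ : Equiv.Perm (Fin n), farc n r hn σ i = F ↔ J.image ⇑σ = F' := by
      intro σ
      rw [harc σ i, hFeq, ← hJ]
      exact ⟨fun h => Finset.image_injective hinj1 h, fun h => by rw [h]⟩
    rw [Finset.filter_congr (fun σ _ => hcond σ), lemmaK n J F' (by rw [hJcard i, hF'card]),
      hJcard i]
  -- double counting
  set N := ∑ σ : Equiv.Perm (Fin n), ((range n).filter fun i => farc n r hn σ i ∈ 𝓕).card with hN
  have hupper : N ≤ Nat.factorial n * r := by
    calc N ≤ ∑ _σ : Equiv.Perm (Fin n), r := Finset.sum_le_sum (fun σ _ => hperm σ)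
    _ = Nat.factorial n * r := by
        rw [Finset.sum_const, Finset.card_univ, Fintype.card_perm, Fintype.card_fin,
          smul_eq_mul]
  have hlower : N = 𝓕.card * (n * (Nat.factorial r * Nat.factorial (n - r))) := by
    have h1 : N = ∑ i ∈ range n, ((Finset.univ : Finset (Equiv.Perm (Fin n))).filter
        (fun σ : Equiv.Perm (Fin n) => farc n r hn σ i ∈ 𝓕)).card := by
      rw [hN]
      simp only [Finset.card_filter]
      exact Finset.sum_comm
    have h2 : ∀ i : ℕ, ((Finset.univ : Finset (Equiv.Perm (Fin n))).filter
        (fun σ : Equiv.Perm (Fin n) => farc n r hn σ i ∈ 𝓕)).card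
        = 𝓕.card * (Nat.factorial r * Nat.factorial (n - r)) := by
      intro i
      have h3 : ((Finset.univ : Finset (Equiv.Perm (Fin n))).filter
          (fun σ : Equiv.Perm (Fin n) => farc n r hn σ i ∈ 𝓕)).card
          = ∑ F ∈ 𝓕, (((Finset.univ : Finset (Equiv.Perm (Fin n))).filter
              (fun σ : Equiv.Perm (Fin n) => farc n r hn σ i ∈ 𝓕)).filter
              (fun σ : Equiv.Perm (Fin n) => farc n r hn σ i = F)).card :=
        Finset.card_eq_sum_card_fiberwise (fun σ hσ => (Finset.mem_filter.1 hσ).2)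
      rw [h3]
      rw [Finset.sum_congr rfl (fun F hF => ?_), Finset.sum_const, smul_eq_mul]
      rw [Finset.filter_filter]
      rw [show ((Finset.univ : Finset (Equiv.Perm (Fin n))).filter
          (fun σ : Equiv.Perm (Fin n) => farc n r hn σ i ∈ 𝓕 ∧ farc n r hn σ i = F))
          = ((Finset.univ : Finset (Equiv.Perm (Fin n))).filter
          (fun σ : Equiv.Perm (Fin n) => farc n r hn σ i = F)) from
        Finset.filter_congr (fun σ _ => ⟨fun h => h.2, fun h => ⟨h ▸ hF, h⟩⟩)]
      exact hfiber i F hF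
    rw [h1, Finset.sum_congr rfl (fun i _ => h2 i), Finset.sum_const, Finset.card_range,
      smul_eq_mul]
    ring
  -- final arithmetic
  have hch : n * Nat.choose (n - 1) (r - 1) = Nat.choose n r * r := by
    have h := Nat.add_one_mul_choose_eq (n - 1) (r - 1)
    have e1 : n - 1 + 1 = n := by omega
    have e2 : r - 1 + 1 = r := by omega
    rw [e1, e2] at h
    exact h
  have hfact : Nat.choose n r * (Nat.factorial r * Nat.factorial (n - r))
      = Nat.factorial n := by
    rw [← Nat.choose_mul_factorial_mul_factorial (le_of_lt hrn)]; ring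
  have hX : 0 < n * (Nat.factorial r * Nat.factorial (n - r)) :=
    Nat.mul_pos hn (Nat.mul_pos (Nat.factorial_pos r) (Nat.factorial_pos (n - r)))
  have hfinal : 𝓕.card * (n * (Nat.factorial r * Nat.factorial (n - r)))
      ≤ (n - 1).choose (r - 1) * (n * (Nat.factorial r * Nat.factorial (n - r))) := by
    rw [← hlower]
    calc N ≤ Nat.factorial n * r := hupper
    _ = (n - 1).choose (r - 1) * (n * (Nat.factorial r * Nat.factorial (n - r))) := by
        rw [← hfact]
        have : Nat.choose n r * (Nat.factorial r * Nat.factorial (n - r)) * r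
            = (Nat.choose n r * r) * (Nat.factorial r * Nat.factorial (n - r)) := by ring
        rw [this, ← hch]
        ring
  exact Nat.le_of_mul_le_mul_right hfinal hX




/-- A family of subsets of `{1,…,n}` is shifted if replacing any element by a smaller
(positive) one stays in the family. -/
def Shifted (n : ℕ) (𝓖 : Finset (Finset ℕ)) : Prop :=
  ∀ G ∈ 𝓖, ∀ i j : ℕ, 1 ≤ i → i < j → j ≤ n → j ∈ G → i ∉ G →
    insert i (G.erase j) ∈ 𝓖

lemma compress_of_moved {i j : ℕ} (hij : i ≠ j) {A : Finset ℕ} (hi : i ∉ A) (hj : j ∈ A) :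
    UV.compress ({i} : Finset ℕ) {j} A = insert i (A.erase j) := by
  rw [UV.compress, if_pos ⟨Finset.disjoint_singleton_left.2 hi,
    Finset.singleton_subset_iff.2 hj⟩]
  ext a
  simp only [sup_eq_union, mem_sdiff, mem_union, mem_singleton, mem_insert, mem_erase]
  constructor
  · rintro ⟨h1 | h1, h2⟩
    · exact Or.inr ⟨h2, h1⟩
    · exact Or.inl h1
  · rintro (rfl | ⟨h1, h2⟩)
    · exact ⟨Or.inr rfl, hij⟩
    · exact ⟨Or.inl h2, h1⟩

lemma compress_of_unmoved {i j : ℕ} {A : Finset ℕ} (h : ¬(i ∉ A ∧ j ∈ A)) :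
    UV.compress ({i} : Finset ℕ) {j} A = A := by
  rw [UV.compress, if_neg]
  intro hcon
  exact h ⟨Finset.disjoint_singleton_left.1 hcon.1, Finset.singleton_subset_iff.1 hcon.2⟩

lemma compress_subset {i j : ℕ} (A : Finset ℕ) :
    UV.compress ({i} : Finset ℕ) {j} A ⊆ insert i A := by
  rw [UV.compress]
  split_ifs with h
  · intro a ha
    simp only [sup_eq_union, mem_sdiff, mem_union, mem_singleton] at ha
    rcases ha.1 with h1 | h1
    · exact mem_insert_of_mem h1
    · exact h1 ▸ mem_insert_self _ _
  · exact subset_insert _ _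

lemma kwise_compression (k i j : ℕ) (hij : i ≠ j) (𝓖 : Finset (Finset ℕ))
    (h : KWiseIntersecting k 𝓖) :
    KWiseIntersecting k (UV.compression {i} {j} 𝓖) := by
  intro f hf
  by_cases hall : ∀ l, f l ∈ 𝓖
  · exact h f hall
  push_neg at hall
  obtain ⟨l₀, hl₀⟩ := hall
  have hrep : ∀ l, ∃ g, g ∈ 𝓖 ∧
      ((f l ∈ 𝓖 ∧ g = UV.compress ({i} : Finset ℕ) {j} (f l)) ∨
       (f l ∉ 𝓖 ∧ i ∈ f l ∧ j ∉ f l ∧ (∀ x, x ≠ i → x ≠ j → (x ∈ g ↔ x ∈ f l)) ∧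
         j ∈ g ∧ i ∉ g)) := by
    intro l
    rcases UV.mem_compression.1 (hf l) with ⟨hmem, hcomp⟩ | ⟨hnmem, b, hb, hbeq⟩
    · exact ⟨_, hcomp, Or.inl ⟨hmem, rfl⟩⟩
    · -- b must be moved
      have hmoved : i ∉ b ∧ j ∈ b := by
        by_contra hcon
        rw [compress_of_unmoved hcon] at hbeq
        exact hnmem (hbeq ▸ hb)
      rw [compress_of_moved hij hmoved.1 hmoved.2] at hbeq
      refine ⟨b, hb, Or.inr ⟨hnmem, ?_, ?_, ?_, hmoved.2, hmoved.1⟩⟩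
      · rw [← hbeq]; exact mem_insert_self _ _
      · rw [← hbeq]
        simp only [mem_insert, mem_erase]
        push_neg
        exact ⟨fun hcon => absurd hcon.symm hij, fun hcon => absurd rfl hcon⟩
      · intro x hxi hxj
        rw [← hbeq]
        simp only [mem_insert, mem_erase]
        constructor
        · intro hx; exact Or.inr ⟨hxj, hx⟩
        · rintro (rfl | ⟨_, hx⟩)
          · exact absurd rfl hxi
          · exact hx
  choose g hg hP using hrep
  obtain ⟨v, hv⟩ := h g hg
  by_cases hvi : v = i
  · exfalso
    rcases hP l₀ with ⟨hmem, _⟩ | ⟨_, _, _, _, _, hni⟩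
    · exact hl₀ hmem
    · exact hni (hvi ▸ hv l₀)
  by_cases hvj : v = j
  · refine ⟨i, fun l => ?_⟩
    rcases hP l with ⟨hmem, hgl⟩ | ⟨_, hif, _, _, _, _⟩
    · -- j ∈ compress (f l) forces unmoved and i ∈ f l
      have hjg : j ∈ g l := hvj ▸ hv l
      rw [hgl] at hjg
      by_cases hmoved : i ∉ f l ∧ j ∈ f l
      · rw [compress_of_moved hij hmoved.1 hmoved.2] at hjg
        simp only [mem_insert, mem_erase] at hjg
        rcases hjg with h1 | h1
        · exact absurd h1.symm hij
        · exact absurd rfl h1.1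
      · rw [compress_of_unmoved hmoved] at hjg
        push_neg at hmoved
        by_contra hni
        exact hmoved hni hjg
    · exact hif
  · refine ⟨v, fun l => ?_⟩
    rcases hP l with ⟨hmem, hgl⟩ | ⟨_, _, _, hiff, _, _⟩
    · have := hv l
      rw [hgl] at this
      have := compress_subset (f l) this
      rcases mem_insert.1 this with h1 | h1
      · exact absurd h1 hvi
      · exact h1
    · exact (hiff v hvi hvj).1 (hv l)


def familyMeasureN (𝓐 : Finset (Finset ℕ)) : ℕ := ∑ A ∈ 𝓐, ∑ a ∈ A, a

lemma measure_compression_lt {i j : ℕ} (hij : i < j) (𝓐 : Finset (Finset ℕ))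
    (hne : UV.compression {i} {j} 𝓐 ≠ 𝓐) :
    familyMeasureN (UV.compression {i} {j} 𝓐) < familyMeasureN 𝓐 := by
  have hijne : i ≠ j := Nat.ne_of_lt hij
  have q : ∀ Q ∈ 𝓐.filter (fun A => UV.compress ({i} : Finset ℕ) {j} A ∉ 𝓐),
      UV.compress ({i} : Finset ℕ) {j} Q ≠ Q := by
    intro Q hQ h
    rw [mem_filter] at hQ
    rw [h] at hQ
    exact hQ.2 hQ.1
  have uA : 𝓐.filter (fun A => UV.compress ({i} : Finset ℕ) {j} A ∈ 𝓐)
      ∪ 𝓐.filter (fun A => UV.compress ({i} : Finset ℕ) {j} A ∉ 𝓐) = 𝓐 :=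
    filter_union_filter_not_eq _ _
  have ne₂ : (𝓐.filter fun A => UV.compress ({i} : Finset ℕ) {j} A ∉ 𝓐).Nonempty := by
    refine nonempty_iff_ne_empty.2 fun z => hne ?_
    rw [UV.compression, filter_image, z, image_empty, union_empty]
    rwa [z, union_empty] at uA
  rw [familyMeasureN, familyMeasureN, UV.compression, sum_union UV.compress_disjoint]
  conv_rhs => rw [← uA]
  rw [sum_union (disjoint_filter_filter_not _ _ _), add_lt_add_iff_left, filter_image,
    sum_image UV.compress_injOn]
  refine sum_lt_sum_of_nonempty ne₂ fun A hA => ?_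
  have hmoved : i ∉ A ∧ j ∈ A := by
    by_contra hcon
    exact q A hA (compress_of_unmoved hcon)
  rw [compress_of_moved hijne hmoved.1 hmoved.2]
  rw [Finset.sum_insert (fun hcon => hmoved.1 (mem_of_mem_erase hcon))]
  have h1 : ∑ x ∈ A.erase j, x + j = ∑ x ∈ A, x := Finset.sum_erase_add _ _ hmoved.2
  omega

lemma exists_shifted (n r k : ℕ) :
    ∀ (M : ℕ) (𝓕 : Finset (Finset ℕ)), familyMeasureN 𝓕 ≤ M →
    (∀ F ∈ 𝓕, F ⊆ Finset.Icc 1 n ∧ F.card = r) → KWiseIntersecting k 𝓕 →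
    ∃ 𝓖 : Finset (Finset ℕ), 𝓖.card = 𝓕.card ∧
      (∀ F ∈ 𝓖, F ⊆ Finset.Icc 1 n ∧ F.card = r) ∧
      KWiseIntersecting k 𝓖 ∧ Shifted n 𝓖 := by
  intro M
  induction M with
  | zero =>
    intro 𝓕 hM h1 h2
    by_cases hsh : ∃ a b : ℕ, 1 ≤ a ∧ a < b ∧ b ≤ n ∧ UV.compression {a} {b} 𝓕 ≠ 𝓕
    · obtain ⟨a, b, h1a, hab, hbn, hne⟩ := hsh
      have := measure_compression_lt hab 𝓕 hne
      omega
    · push_neg at hsh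
      refine ⟨𝓕, rfl, h1, h2, ?_⟩
      intro G hG a b h1a hab hbn hbG haG
      have heq := hsh a b h1a hab hbn
      have := UV.compress_mem_compression (u := ({a} : Finset ℕ)) (v := {b}) hG
      rw [heq, compress_of_moved (Nat.ne_of_lt hab) haG hbG] at this
      exact this
  | succ M IH =>
    intro 𝓕 hM h1 h2
    by_cases hsh : ∃ a b : ℕ, 1 ≤ a ∧ a < b ∧ b ≤ n ∧ UV.compression {a} {b} 𝓕 ≠ 𝓕
    · obtain ⟨a, b, h1a, hab, hbn, hne⟩ := hsh
      have hlt := measure_compression_lt hab 𝓕 hne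
      have hprops : ∀ F ∈ UV.compression {a} {b} 𝓕, F ⊆ Finset.Icc 1 n ∧ F.card = r := by
        intro F hF
        rcases UV.mem_compression.1 hF with ⟨hmem, _⟩ | ⟨_, B, hB, hBeq⟩
        · exact h1 F hmem
        · obtain ⟨hBsub, hBcard⟩ := h1 B hB
          constructor
          · rw [← hBeq]
            intro x hx
            rcases mem_insert.1 (compress_subset B hx) with rfl | hxB
            · exact Finset.mem_Icc.2 ⟨h1a, by omega⟩
            · exact hBsub hxB
          · rw [← hBeq, UV.card_compress (by simp), hBcard]
      obtain ⟨𝓖, hc, hp, hk, hs⟩ := IH (UV.compression {a} {b} 𝓕) (by omega) hprops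
        (kwise_compression k a b (Nat.ne_of_lt hab) 𝓕 h2)
      exact ⟨𝓖, by rw [hc, UV.card_compression], hp, hk, hs⟩
    · push_neg at hsh
      refine ⟨𝓕, rfl, h1, h2, ?_⟩
      intro G hG a b h1a hab hbn hbG haG
      have heq := hsh a b h1a hab hbn
      have := UV.compress_mem_compression (u := ({a} : Finset ℕ)) (v := {b}) hG
      rw [heq, compress_of_moved (Nat.ne_of_lt hab) haG hbG] at this
      exact this



/-- Frankl's key lemma: for a shifted `k`-wise intersecting family, the link of `n`
is also `k`-wise intersecting. -/
lemma kwise_link (n r k : ℕ) (hk : 2 ≤ k) (hr : 1 ≤ r) (hn : 2 ≤ n)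
    (hkr : k * r ≤ (k - 1) * n)
    (𝓖 : Finset (Finset ℕ)) (h𝓖 : ∀ F ∈ 𝓖, F ⊆ Finset.Icc 1 n ∧ F.card = r)
    (hint : KWiseIntersecting k 𝓖) (hsh : Shifted n 𝓖) :
    KWiseIntersecting k ((𝓖.filter (fun G => n ∈ G)).image (fun G => G.erase n)) := by
  classical
  intro f hf
  have hGex : ∀ l, ∃ G, G ∈ 𝓖 ∧ n ∈ G ∧ G.erase n = f l := by
    intro l
    obtain ⟨G, hG, hGe⟩ := mem_image.1 (hf l)
    exact ⟨G, (mem_filter.1 hG).1, (mem_filter.1 hG).2, hGe⟩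
  choose G hG hnG hGf using hGex
  by_contra hno
  push_neg at hno
  have hfsub : ∀ l, f l ⊆ Finset.Icc 1 (n - 1) := by
    intro l x hx
    rw [← hGf l] at hx
    have hx1 := (h𝓖 (G l) (hG l)).1 (mem_of_mem_erase hx)
    rw [Finset.mem_Icc] at hx1 ⊢
    have := (Finset.mem_erase.1 hx).1
    omega
  have hfcard : ∀ l, (f l).card = r - 1 := by
    intro l
    rw [← hGf l, Finset.card_erase_of_mem (hnG l), (h𝓖 (G l) (hG l)).2]
  set B : Fin k → Finset ℕ :=
    fun l => (Finset.Icc 1 (n - 1)).filter (fun x => ∀ m, m ≠ l → x ∈ f m) with hB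
  have hBmem : ∀ l x, x ∈ B l ↔ (x ∈ Finset.Icc 1 (n - 1) ∧ ∀ m, m ≠ l → x ∈ f m) := by
    intro l x; rw [hB]; simp [mem_filter]
  -- B's are pairwise disjoint
  have hBdisj : ∀ l l' : Fin k, l ≠ l' → Disjoint (B l) (B l') := by
    intro l l' hll'
    rw [Finset.disjoint_left]
    intro x hxl hxl'
    have h1 := (hBmem l x).1 hxl
    have h2 := (hBmem l' x).1 hxl'
    obtain ⟨m, hm⟩ := hno x
    by_cases hml : m = l
    · exact hm (hml ▸ h2.2 l hll')
    · exact hm (h1.2 m hml)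
  -- existence of a good pair (l, x)
  have hlx : ∃ (l : Fin k) (x : ℕ), x ∈ Finset.Icc 1 (n - 1) ∧ x ∉ f l ∧ x ∉ B l := by
    by_contra hcon
    push_neg at hcon
    have hBcard : ∀ l, n - 1 ≤ (f l).card + (B l).card := by
      intro l
      have hsub : Finset.Icc 1 (n - 1) ⊆ f l ∪ B l := by
        intro x hx
        by_cases hxf : x ∈ f l
        · exact mem_union_left _ hxf
        · exact mem_union_right _ (hcon l x hx hxf)
      calc n - 1 = (Finset.Icc 1 (n - 1)).card := by rw [Nat.card_Icc]; omega
      _ ≤ (f l ∪ B l).card := card_le_card hsub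
      _ ≤ (f l).card + (B l).card := card_union_le _ _
    have hBge : ∀ l, n - r ≤ (B l).card := by
      intro l
      have := hBcard l
      rw [hfcard l] at this
      omega
    have hsumB : ∀ m : Fin k, ∑ l ∈ Finset.univ.erase m, (B l).card ≤ r - 1 := by
      intro m
      have hdisj : ((Finset.univ.erase m : Finset (Fin k)) : Set (Fin k)).PairwiseDisjoint B := by
        intro a _ b _ hab
        exact hBdisj a b hab
      have hsub : (Finset.univ.erase m).biUnion B ⊆ f m := by
        intro x hx
        obtain ⟨l, hl, hxl⟩ := Finset.mem_biUnion.1 hx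
        exact ((hBmem l x).1 hxl).2 m (Ne.symm (Finset.mem_erase.1 hl).1)
      calc ∑ l ∈ Finset.univ.erase m, (B l).card
          = ((Finset.univ.erase m).biUnion B).card := (Finset.card_biUnion hdisj).symm
      _ ≤ (f m).card := card_le_card hsub
      _ = r - 1 := hfcard m
    -- sum over all m
    set P := ∑ l : Fin k, (B l).card with hP
    have hswap : ∑ m : Fin k, ∑ l ∈ Finset.univ.erase m, (B l).card = (k - 1) * P := by
      rw [Finset.sum_comm' (t' := Finset.univ) (s' := fun l => Finset.univ.erase l)]
      · rw [hP, Finset.mul_sum]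
        apply Finset.sum_congr rfl
        intro l _
        rw [Finset.sum_const, Finset.card_erase_of_mem (Finset.mem_univ l),
          Finset.card_univ, Fintype.card_fin, smul_eq_mul]
      · intro x y
        simp only [Finset.mem_univ, Finset.mem_erase, true_and, and_true]
        exact ⟨fun h => Ne.symm h, fun h => Ne.symm h⟩
    have htot : (k - 1) * P ≤ k * (r - 1) := by
      rw [← hswap]
      calc ∑ m : Fin k, ∑ l ∈ Finset.univ.erase m, (B l).card
          ≤ ∑ _m : Fin k, (r - 1) := Finset.sum_le_sum (fun m _ => hsumB m)
      _ = k * (r - 1) := by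
          rw [Finset.sum_const, Finset.card_univ, Fintype.card_fin, smul_eq_mul]
    have hPge : k * (n - r) ≤ P := by
      rw [hP]
      calc k * (n - r) = ∑ _l : Fin k, (n - r) := by
            rw [Finset.sum_const, Finset.card_univ, Fintype.card_fin, smul_eq_mul]
      _ ≤ ∑ l : Fin k, (B l).card := Finset.sum_le_sum (fun l _ => hBge l)
    -- r ≤ (k-1) * (n - r)
    have hrle : r ≤ (k - 1) * (n - r) := by
      have hrn : r ≤ n := by
        have h2 : (k - 1) * n ≤ k * n := Nat.mul_le_mul_right n (by omega)
        have h3 : k * r ≤ k * n := le_trans hkr h2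
        exact Nat.le_of_mul_le_mul_left h3 (by omega)
      have e1 : (k - 1) * n = (k - 1) * r + (k - 1) * (n - r) := by
        rw [← Nat.mul_add]
        congr 1
        omega
      have e2 : k * r = (k - 1) * r + r := by
        have : k = (k - 1) + 1 := by omega
        calc k * r = ((k - 1) + 1) * r := by rw [← this]
        _ = (k - 1) * r + r := by ring
      omega
    have hchain1 : (k - 1) * (k * (n - r)) ≤ (k - 1) * P := Nat.mul_le_mul_left _ hPge
    have hchain2 : k * r ≤ k * ((k - 1) * (n - r)) := Nat.mul_le_mul_left _ hrle
    have hcomm : k * ((k - 1) * (n - r)) = (k - 1) * (k * (n - r)) := by ring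
    have hkr1 : k * (r - 1) + k = k * r := by
      have : r - 1 + 1 = r := by omega
      calc k * (r - 1) + k = k * ((r - 1) + 1) := by ring
      _ = k * r := by rw [this]
    omega
  obtain ⟨l, x, hxI, hxf, hxB⟩ := hlx
  have hx1 : 1 ≤ x := (Finset.mem_Icc.1 hxI).1
  have hxn : x < n := by
    have := (Finset.mem_Icc.1 hxI).2
    omega
  -- the shifted replacement set
  have hxG : x ∉ G l := by
    intro hcon
    exact hxf (by rw [← hGf l]; exact Finset.mem_erase.2 ⟨by omega, hcon⟩)
  have hshift : insert x ((G l).erase n) ∈ 𝓖 :=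
    hsh (G l) (hG l) x n hx1 hxn le_rfl (hnG l) hxG
  obtain ⟨v, hv⟩ := hint (fun m => if m = l then insert x ((G l).erase n) else G m)
    (by
      intro m
      by_cases hm : m = l
      · simp only [if_pos hm]; exact hshift
      · simp only [if_neg hm]; exact hG m)
  have hvl := hv l
  simp only [if_pos rfl, hGf l] at hvl
  rcases Finset.mem_insert.1 hvl with rfl | hvf
  · -- v = x : then x ∈ B l, contradiction
    apply hxB
    rw [hBmem]
    refine ⟨hxI, fun m hm => ?_⟩
    have := hv m
    simp only [if_neg hm] at this
    rw [← hGf m]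
    exact Finset.mem_erase.2 ⟨by omega, this⟩
  · -- v ∈ f l : then v is common to all f m, contradiction
    obtain ⟨m, hm⟩ := hno v
    apply hm
    by_cases hml : m = l
    · exact hml ▸ hvf
    · have := hv m
      simp only [if_neg hml] at this
      have hvlt := (Finset.mem_Icc.1 (hfsub l hvf)).2
      rw [← hGf m]
      exact Finset.mem_erase.2 ⟨by omega, this⟩

lemma main (N : ℕ) : ∀ n, n ≤ N → ∀ r k, 0 < n → 0 < r → 2 ≤ k →
    k * r ≤ (k - 1) * n → ∀ 𝓕 : Finset (Finset ℕ),
    (∀ F ∈ 𝓕, F ⊆ Finset.Icc 1 n ∧ F.card = r) → KWiseIntersecting k 𝓕 →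
    𝓕.card ≤ (n - 1).choose (r - 1) := by
  induction N with
  | zero => intro n hn0 r k hn; omega
  | succ N IH =>
    intro n hnN r k hn hr hk hkr 𝓕 h𝓕 hint
    by_cases hbdry : (k - 1) * (n - 1) < k * r
    · exact boundary n r k hn hr hk hkr hbdry 𝓕 h𝓕 hint
    · push_neg at hbdry
      have hn2 : 2 ≤ n := by
        rcases Nat.lt_or_ge n 2 with h | h
        · exfalso
          have hn1 : n = 1 := by omega
          subst hn1
          simp at hbdry
          have : k * 1 ≤ k * r := Nat.mul_le_mul_left k hr
          omega
        · exact h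
      obtain ⟨𝓖, hGcard, hGprops, hGint, hGsh⟩ :=
        exists_shifted n r k (∑ A ∈ 𝓕, ∑ a ∈ A, a) 𝓕 le_rfl h𝓕 hint
      set 𝓖₀ := 𝓖.filter (fun G => n ∉ G) with h𝓖₀
      set 𝓖₁' := 𝓖.filter (fun G => n ∈ G) with h𝓖₁'
      set 𝓖₁ := 𝓖₁'.image (fun G => G.erase n) with h𝓖₁
      have hsplit : 𝓖₁'.card + 𝓖₀.card = 𝓖.card :=
        Finset.card_filter_add_card_filter_not _
      have himg : 𝓖₁.card = 𝓖₁'.card := by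
        rw [h𝓖₁]
        apply Finset.card_image_of_injOn
        intro G₁ hG₁ G₂ hG₂ heq
        dsimp only at heq
        simp only [mem_coe, h𝓖₁', mem_filter] at hG₁ hG₂
        rw [← Finset.insert_erase hG₁.2, ← Finset.insert_erase hG₂.2, heq]
      -- bound for 𝓖₀
      have hb₀ : 𝓖₀.card ≤ (n - 2).choose (r - 1) := by
        have := IH (n - 1) (by omega) r k (by omega) hr hk (by
          have e : n - 1 = n - 1 := rfl
          omega) 𝓖₀
          (by
            intro F hF
            rw [h𝓖₀, mem_filter] at hF
            obtain ⟨hsub, hcard⟩ := hGprops F hF.1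
            refine ⟨?_, hcard⟩
            intro x hx
            have := hsub hx
            rw [Finset.mem_Icc] at this ⊢
            have hxn : x ≠ n := fun hcon => hF.2 (hcon ▸ hx)
            omega)
          (by
            intro f hf
            exact hGint f (fun l => (mem_filter.1 (hf l)).1))
        have e : n - 1 - 1 = n - 2 := by omega
        rwa [e] at this
      -- bound for 𝓖₁
      have hb₁ : 𝓖₁.card ≤ if r = 1 then 0 else (n - 2).choose (r - 2) := by
        have hkint : KWiseIntersecting k 𝓖₁ := by
          rw [h𝓖₁, h𝓖₁']
          exact kwise_link n r k hk hr hn2 hkr 𝓖 hGprops hGint hGsh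
        by_cases hr1 : r = 1
        · simp only [if_pos hr1]
          rw [Nat.le_zero, Finset.card_eq_zero]
          by_contra hne
          obtain ⟨E, hE⟩ := Finset.nonempty_iff_ne_empty.2 hne
          have hEempty : E = ∅ := by
            rw [h𝓖₁] at hE
            obtain ⟨G', hG', rfl⟩ := mem_image.1 hE
            rw [h𝓖₁', mem_filter] at hG'
            have hcard := (hGprops G' hG'.1).2
            rw [hr1] at hcard
            obtain ⟨a, ha⟩ := Finset.card_eq_one.1 hcard
            rw [ha]
            rw [ha, Finset.mem_singleton] at hG'
            rw [← hG'.2]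
            simp
          obtain ⟨v, hv⟩ := hkint (fun _ => E) (fun _ => hE)
          have := hv ⟨0, by omega⟩
          rw [hEempty] at this
          simp at this
        · simp only [if_neg hr1]
          have hr2 : 2 ≤ r := by omega
          have := IH (n - 1) (by omega) (r - 1) k (by omega) (by omega) hk
            (by
              have e1 : k * r = k * (r - 1) + k := by
                have h : r - 1 + 1 = r := by omega
                calc k * r = k * ((r - 1) + 1) := by rw [h]
                _ = k * (r - 1) + k := by ring
              have e2 : (k - 1) * n = (k - 1) * (n - 1) + (k - 1) := by
                have h : n - 1 + 1 = n := by omega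
                calc (k - 1) * n = (k - 1) * ((n - 1) + 1) := by rw [h]
                _ = (k - 1) * (n - 1) + (k - 1) := by ring
              omega) 𝓖₁
            (by
              intro F hF
              rw [h𝓖₁] at hF
              obtain ⟨G', hG', rfl⟩ := mem_image.1 hF
              rw [h𝓖₁', mem_filter] at hG'
              obtain ⟨hsub, hcard⟩ := hGprops G' hG'.1
              constructor
              · intro x hx
                have hx1 := hsub (mem_of_mem_erase hx)
                rw [Finset.mem_Icc] at hx1 ⊢
                have := (Finset.mem_erase.1 hx).1
                omega
              · rw [Finset.card_erase_of_mem hG'.2, hcard])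
            hkint
          have e1 : n - 1 - 1 = n - 2 := by omega
          have e2 : r - 1 - 1 = r - 2 := by omega
          rwa [e1, e2] at this
      have htotal : 𝓕.card = 𝓖₁.card + 𝓖₀.card := by
        rw [← hGcard, ← hsplit, himg]
      by_cases hr1 : r = 1
      · simp only [if_pos hr1] at hb₁
        have h1 : (n - 1).choose (r - 1) = 1 := by rw [hr1]; simp
        have h2 : (n - 2).choose (r - 1) = 1 := by rw [hr1]; simp
        omega
      · simp only [if_neg hr1] at hb₁
        have hpas : (n - 1).choose (r - 1) = (n - 2).choose (r - 2) + (n - 2).choose (r - 1) := by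
          have e1 : n - 1 = (n - 2) + 1 := by omega
          have e2 : r - 1 = (r - 2) + 1 := by omega
          have e3 : r - 2 + 1 = r - 1 := by omega
          rw [e1, e2, Nat.choose_succ_succ', e3]
        omega



end FranklAux

/-- **Frankl's theorem.** If `𝓕` is a `k`-wise intersecting family of `r`-subsets of
`{1,…,n}` and `k·r ≤ (k−1)·n`, then `|𝓕| ≤ C(n−1, r−1)`. -/
theorem frankl_kwise (n r k : ℕ) (hn : 0 < n) (hr : 0 < r) (hk : 2 ≤ k)
    (hkr : k * r ≤ (k - 1) * n)
    (𝓕 : Finset (Finset ℕ))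
    (h𝓕 : ∀ F ∈ 𝓕, F ⊆ Finset.Icc 1 n ∧ F.card = r)
    (hint : KWiseIntersecting k 𝓕) :
    𝓕.card ≤ (n - 1).choose (r - 1) := by
  exact FranklAux.main n n le_rfl r k hn hr hk hkr 𝓕 h𝓕 hint
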